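/- Adaptive-batching window telescope (deterministic core of Theorem 5 for STIMULUS+). Let η ≥ 0, L ≥ 0, q ≥ 1, c_γ > 0, c_ε > 0, ε ≥ 0, let a, t ∈ ℕ with a·q ≤ t ≤ (a+1)·q − 1, let f : ℝ^d → ℝ, and let (x_j), (d_j) be sequences in ℝ^d. Assume that for every j with a·q ≤ j ≤ t: f(x_{j+1}) ≤ f(x_j) − (η/4)·‖d_j‖² + (η³·L²/(2q))·Σ_{i=aq}^{j} ‖d_i‖² + (η/2)·(γ_j/c_γ + ε/c_ε), where γ_j := (1/q)·Σ_{i=aq}^{j} ‖d_i‖². Then f(x_{t+1}) ≤ f(x_{aq}) − (η/4 − η³·L²/2 − η/(2·c_γ))·Σ_{j=aq}^{t} ‖d_j‖² + (η/2)·(t − a·q + 1)·ε/c_ε. -/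

import Mathlib

open scoped BigOperators

/-- Adaptive-batching window telescope: deterministic core of Theorem 5 for STIMULUS+
(Eqs. (53)–(54) in the paper's appendix). -/
theorem stimulus_plus_window_telescope {dim : ℕ} (η L : ℝ) (hη : 0 ≤ η) (hL : 0 ≤ L)
    (q : ℕ) (hq : 1 ≤ q) (cγ cε ε : ℝ) (hcγ : 0 < cγ) (hcε : 0 < cε) (hε : 0 ≤ ε)
    (a t : ℕ) (hat : a * q ≤ t) (hta : t ≤ (a + 1) * q - 1)
    (f : EuclideanSpace ℝ (Fin dim) → ℝ)
    (x d : ℕ → EuclideanSpace ℝ (Fin dim))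
    (γ : ℕ → ℝ)
    (hγ : ∀ j, γ j = (1 / (q : ℝ)) * ∑ i ∈ Finset.Icc (a * q) j, ‖d i‖ ^ 2)
    (hstep : ∀ j, a * q ≤ j → j ≤ t →
      f (x (j + 1)) ≤ f (x j) - (η / 4) * ‖d j‖ ^ 2
        + (η ^ 3 * L ^ 2 / (2 * (q : ℝ))) * ∑ i ∈ Finset.Icc (a * q) j, ‖d i‖ ^ 2
        + (η / 2) * (γ j / cγ + ε / cε)) :
    f (x (t + 1)) ≤ f (x (a * q))
      - (η / 4 - η ^ 3 * L ^ 2 / 2 - η / (2 * cγ)) * ∑ j ∈ Finset.Icc (a * q) t, ‖d j‖ ^ 2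
      + (η / 2) * ((t : ℝ) - (a * q : ℕ) + 1) * (ε / cε) := by
  have hq0 : (0:ℝ) < (q:ℝ) := by exact_mod_cast hq
  set C : ℝ := η ^ 3 * L ^ 2 / (2 * (q : ℝ)) + η / (2 * (q:ℝ) * cγ) with hC
  set S : ℕ → ℝ := fun j => ∑ i ∈ Finset.Icc (a * q) j, ‖d i‖ ^ 2 with hS
  have hCnn : 0 ≤ C := by
    rw [hC]; positivity
  have hstep' : ∀ j, a * q ≤ j → j ≤ t →
      f (x (j + 1)) ≤ f (x j) - (η / 4) * ‖d j‖ ^ 2 + C * S j + (η / 2) * (ε / cε) := by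
    intro j h1 h2
    have := hstep j h1 h2
    rw [hγ j] at this
    have hrw : f (x j) - η / 4 * ‖d j‖ ^ 2
        + η ^ 3 * L ^ 2 / (2 * (q:ℝ)) * ∑ i ∈ Finset.Icc (a * q) j, ‖d i‖ ^ 2
        + η / 2 * (1 / (q:ℝ) * (∑ i ∈ Finset.Icc (a * q) j, ‖d i‖ ^ 2) / cγ + ε / cε)
        = f (x j) - (η / 4) * ‖d j‖ ^ 2 + C * S j + (η / 2) * (ε / cε) := by
      simp only [hC, hS]
      field_simp
      ring
    linarith [hrw ▸ this]
  have key : ∀ tt, a * q ≤ tt → tt ≤ t →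
      f (x (tt + 1)) ≤ f (x (a * q))
        - (η / 4) * ∑ j ∈ Finset.Icc (a * q) tt, ‖d j‖ ^ 2
        + C * ∑ j ∈ Finset.Icc (a * q) tt, S j
        + (η / 2) * ((tt : ℝ) - (a * q : ℕ) + 1) * (ε / cε) := by
    intro tt htt
    induction tt, htt using Nat.le_induction with
    | base =>
      intro h
      have := hstep' (a * q) le_rfl h
      simp only [Finset.Icc_self, Finset.sum_singleton] at this ⊢
      have : f (x (a * q + 1)) ≤ f (x (a*q)) - η / 4 * ‖d (a*q)‖ ^ 2 + C * S (a*q)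
          + η / 2 * (ε / cε) := this
      have hS0 : S (a*q) = ‖d (a*q)‖^2 := by
        simp [hS]
      rw [hS0] at this
      nlinarith [this]
    | succ n hn ih =>
      intro h
      have ih' := ih (le_trans (Nat.le_succ n) h)
      have hstepn := hstep' (n + 1) (le_trans hn (Nat.le_succ n)) h
      rw [Finset.sum_Icc_succ_top (le_trans hn (Nat.le_succ n)),
          Finset.sum_Icc_succ_top (le_trans hn (Nat.le_succ n))]
      push_cast at ih' ⊢
      linarith [ih', hstepn]
  have hmain := key t hat le_rfl
  -- bound the double sum
  have hSmono : ∀ j ∈ Finset.Icc (a*q) t, S j ≤ S t := by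
    intro j hj
    rw [Finset.mem_Icc] at hj
    apply Finset.sum_le_sum_of_subset_of_nonneg
    · exact Finset.Icc_subset_Icc_right hj.2
    · intro i _ _; positivity
  have hcard : (Finset.Icc (a*q) t).card = t + 1 - a*q := Nat.card_Icc _ _
  have hta' : t ≤ a * q + q - 1 := by rw [Nat.succ_mul] at hta; exact hta
  have hcardq : t + 1 - a*q ≤ q := by omega
  have hStnn : 0 ≤ S t := by positivity
  have hsum : ∑ j ∈ Finset.Icc (a*q) t, S j ≤ (q:ℝ) * S t := by
    calc ∑ j ∈ Finset.Icc (a*q) t, S j ≤ ∑ _j ∈ Finset.Icc (a*q) t, S t :=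
          Finset.sum_le_sum hSmono
      _ = ((t + 1 - a*q : ℕ) : ℝ) * S t := by rw [Finset.sum_const, hcard]; push_cast; ring
      _ ≤ (q:ℝ) * S t := by
          apply mul_le_mul_of_nonneg_right _ hStnn
          exact_mod_cast hcardq
  have hCq : C * ((q:ℝ) * S t) = (η ^ 3 * L ^ 2 / 2 + η / (2 * cγ)) * S t := by
    rw [hC]
    field_simp
  have hfinal : C * ∑ j ∈ Finset.Icc (a*q) t, S j ≤ (η ^ 3 * L ^ 2 / 2 + η / (2 * cγ)) * S t := by
    calc C * ∑ j ∈ Finset.Icc (a*q) t, S j ≤ C * ((q:ℝ) * S t) :=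
          mul_le_mul_of_nonneg_left hsum hCnn
      _ = _ := hCq
  have hSdef : S t = ∑ j ∈ Finset.Icc (a*q) t, ‖d j‖ ^ 2 := rfl
  nlinarith [hmain, hfinal]
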